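/- Let I be a real symmetric positive definite n×n matrix, Σ a real symmetric positive definite k×k matrix, G a real k×n matrix with I ⪰ Gᵀ Σ⁻¹ G, and let C be a real symmetric positive semidefinite n×n matrix with C ⪯ I⁻¹ (i.e., I⁻¹ − C is positive semidefinite). Then G C Gᵀ ⪯ Σ, i.e., Σ − G C Gᵀ is positive semidefinite. -/

import Mathlib

open Matrix

/-- Let `I` be a real symmetric positive definite `n×n` matrix, `Σ` a real symmetric
positive definite `k×k` matrix, `G` a real `k×n` matrix with `I ⪰ Gᵀ Σ⁻¹ G`, and `C`
a real symmetric positive semidefinite `n×n` matrix with `C ⪯ I⁻¹`.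
Then `G C Gᵀ ⪯ Σ`. -/
theorem cov_propagation_le_target {n k : ℕ}
    (I : Matrix (Fin n) (Fin n) ℝ) (hI : I.PosDef)
    (S : Matrix (Fin k) (Fin k) ℝ) (hS : S.PosDef)
    (G : Matrix (Fin k) (Fin n) ℝ)
    (hIJ : (I - Gᵀ * S⁻¹ * G).PosSemidef)
    (C : Matrix (Fin n) (Fin n) ℝ) (hC : C.PosSemidef)
    (hCR : (I⁻¹ - C).PosSemidef) :
    (S - G * C * Gᵀ).PosSemidef := by
  have : Invertible I := hI.isUnit.invertible
  have : Invertible S := hS.isUnit.invertible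
  have hGT : Gᴴ = Gᵀ := by ext i j; simp [conjTranspose_apply]
  have h1 : (S - G * I⁻¹ * Gᵀ).PosSemidef := by
    have hb : (fromBlocks S G Gᴴ I).PosSemidef := by
      rw [Matrix.PosDef.fromBlocks₁₁ _ _ hS]
      simpa [hGT] using hIJ
    have := (Matrix.PosDef.fromBlocks₂₂ _ _ hI).mp hb
    simpa [hGT] using this
  have h2 : (G * (I⁻¹ - C) * Gᵀ).PosSemidef := by
    simpa [hGT] using hCR.mul_mul_conjTranspose_same G
  have := h1.add h2
  have heq : S - G * I⁻¹ * Gᵀ + G * (I⁻¹ - C) * Gᵀ = S - G * C * Gᵀ := by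
    rw [Matrix.mul_sub, Matrix.sub_mul]
    abel
  rwa [heq] at this
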